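/- If n and a are integers with 3 ≤ a ≤ ⌊n/2⌋ and 3a ≤ n, then every 2-bounded independent broadcast f on C(n;1,a) satisfies σ(f) ≤ ⌊(n − |V_f^2|)/2⌋, where V_f^2 is the set of vertices v with f(v) = 2. -/

import Mathlib

/-- The eccentricity of a vertex: maximum distance to any other vertex. -/
noncomputable def eccent {V : Type*} [Fintype V] (G : SimpleGraph V) (v : V) : ℕ :=
  Finset.univ.sup (fun u => G.dist v u)

/-- The diameter of a finite graph: maximum eccentricity. -/
noncomputable def graphDiam {V : Type*} [Fintype V] (G : SimpleGraph V) : ℕ :=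
  Finset.univ.sup (fun v => eccent G v)

/-- `f` is an independent broadcast on `G`. -/
def IsIndepBroadcast {V : Type*} [Fintype V] (G : SimpleGraph V) (f : V → ℕ) : Prop :=
  (∀ v, f v ≤ eccent G v) ∧
  ∀ u v : V, u ≠ v → 0 < f u → 0 < f v → max (f u) (f v) < G.dist u v

/-- The broadcast independence number: maximum cost of an independent broadcast. -/
noncomputable def betaB {V : Type*} [Fintype V] (G : SimpleGraph V) : ℕ :=
  sSup {k | ∃ f : V → ℕ, IsIndepBroadcast G f ∧ ∑ v, f v = k}

/-- The independence number: maximum size of an independent set. -/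
noncomputable def alphaNum {V : Type*} [Fintype V] (G : SimpleGraph V) : ℕ :=
  sSup {k | ∃ s : Finset V, (∀ u ∈ s, ∀ v ∈ s, ¬ G.Adj u v) ∧ s.card = k}

/-- The circulant graph `C(n;1,a)` on vertices `v_0,…,v_{n-1}` with edges
`v_i v_{i+1}` and `v_i v_{i+a}`, indices mod `n`. -/
def circulantGraph (n a : ℕ) : SimpleGraph (Fin n) :=
  SimpleGraph.fromRel (fun i j => (i.val + 1) % n = j.val ∨ (i.val + a) % n = j.val)

open Fin.NatCast

lemma castFin_inj {m c c' : ℕ} (hc : c < m+1) (hc' : c' < m+1) :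
    ((c : Fin (m+1)) = (c' : Fin (m+1))) ↔ c = c' := by
  rw [Fin.ext_iff, Fin.val_natCast, Fin.val_natCast, Nat.mod_eq_of_lt hc, Nat.mod_eq_of_lt hc']

lemma circAdj {m a : ℕ} (ha : 0 < a) (han : a < m+1) {c : ℕ} (hc : c = 1 ∨ c = a)
    (v : Fin (m+1)) : (circulantGraph (m+1) a).Adj v (v + (c : Fin (m+1))) := by
  have hc0 : 0 < c := by rcases hc with rfl | rfl <;> omega
  have hcm : c < m+1 := by rcases hc with rfl | rfl <;> omega
  have hval : (v + (c : Fin (m+1))).val = (v.val + c) % (m+1) := by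
    rw [Fin.val_add, Fin.val_natCast, Nat.mod_eq_of_lt hcm]
  rw [circulantGraph, SimpleGraph.fromRel_adj]
  refine ⟨?_, Or.inl ?_⟩
  · intro h
    have : (c : Fin (m+1)) = ((0:ℕ) : Fin (m+1)) := by
      have := h.symm
      nth_rewrite 2 [show v = v + ((0:ℕ) : Fin (m+1)) by simp] at this
      exact add_left_cancel this
    rw [castFin_inj hcm (by omega)] at this
    omega
  · rcases hc with rfl | rfl
    · exact Or.inl hval.symm
    · exact Or.inr hval.symm

lemma circReach {m a : ℕ} (ha : 0 < a) (han : a < m+1) (v : Fin (m+1)) (k : ℕ) :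
    (circulantGraph (m+1) a).Reachable v (v + (k : Fin (m+1))) := by
  induction k with
  | zero => simpa using SimpleGraph.Reachable.refl v
  | succ k ih =>
    have : ((k+1 : ℕ) : Fin (m+1)) = (k : Fin (m+1)) + ((1:ℕ) : Fin (m+1)) := by push_cast; ring
    rw [this, ← add_assoc]
    exact ih.trans (circAdj ha han (Or.inl rfl) _).reachable

lemma circConn {m a : ℕ} (ha : 0 < a) (han : a < m+1) :
    (circulantGraph (m+1) a).Connected := by
  rw [SimpleGraph.connected_iff]
  refine ⟨fun u v => ?_, ⟨0⟩⟩
  have hkey : u + (((v.val + (m+1 - u.val)) : ℕ) : Fin (m+1)) = v := by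
    have h1 : u.val + (v.val + (m+1 - u.val)) = (m+1) + v.val := by
      have := u.isLt; omega
    apply Fin.ext
    rw [Fin.val_add, Fin.val_natCast, Nat.add_mod_mod, h1, Nat.add_mod_left,
      Nat.mod_eq_of_lt v.isLt]
  rw [← hkey]
  exact circReach ha han u _

lemma circDistLe {m a : ℕ} (ha : 3 ≤ a) (h3a : 3 * a ≤ m + 1) (v : Fin (m+1)) {c : ℕ}
    (hc : c = 0 ∨ c = 1 ∨ c = a ∨ c = m ∨ c = m + 1 - a) :
    (circulantGraph (m+1) a).dist v (v + (c : Fin (m+1))) ≤ 1 := by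
  have ha0 : 0 < a := by omega
  have han : a < m + 1 := by omega
  rcases hc with rfl | rfl | rfl | hc | hc
  · simp [SimpleGraph.dist_self]
  · exact le_of_eq (SimpleGraph.dist_eq_one_iff_adj.mpr (circAdj ha0 han (Or.inl rfl) v))
  · exact le_of_eq (SimpleGraph.dist_eq_one_iff_adj.mpr (circAdj ha0 han (Or.inr rfl) v))
  · rw [hc]
    have key : (v + ((m:ℕ) : Fin (m+1))) + ((1:ℕ) : Fin (m+1)) = v := by
      rw [add_assoc, ← Nat.cast_add, Fin.natCast_self, add_zero]
    have hadj := circAdj ha0 han (Or.inl rfl) (v + ((m:ℕ) : Fin (m+1)))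
    rw [key] at hadj
    rw [SimpleGraph.dist_comm]
    exact le_of_eq (SimpleGraph.dist_eq_one_iff_adj.mpr hadj)
  · rw [hc]
    have key : (v + ((m+1-a : ℕ) : Fin (m+1))) + ((a:ℕ) : Fin (m+1)) = v := by
      rw [add_assoc, ← Nat.cast_add, show m+1-a+a = m+1 by omega, Fin.natCast_self, add_zero]
    have hadj := circAdj ha0 han (Or.inr rfl) (v + ((m+1-a:ℕ) : Fin (m+1)))
    rw [key] at hadj
    rw [SimpleGraph.dist_comm]
    exact le_of_eq (SimpleGraph.dist_eq_one_iff_adj.mpr hadj)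


theorem stmt10 (n a : ℕ) (ha : 3 ≤ a) (han : a ≤ n / 2) (h3a : 3 * a ≤ n)
    (f : Fin n → ℕ) (hf : IsIndepBroadcast (circulantGraph n a) f)
    (hb : ∀ v, f v ≤ 2) :
    (∑ v, f v) ≤ (n - (Finset.univ.filter (fun v => f v = 2)).card) / 2 := by
  have hf2 := hf.2
  classical
  obtain ⟨m, rfl⟩ : ∃ m, n = m + 1 := ⟨n - 1, by omega⟩
  have hn9 : 9 ≤ m + 1 := by omega
  set G := circulantGraph (m+1) a with hG
  have ha0 : 0 < a := by omega
  have han : a < m + 1 := by omega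
  have hconn : G.Connected := circConn ha0 han
  -- the list of admissible offsets
  set P : ℕ → Prop := fun c => c = 0 ∨ c = 1 ∨ c = a ∨ c = m ∨ c = m + 1 - a with hP
  have hd1 : ∀ (v : Fin (m+1)) (c : ℕ), P c → G.dist v (v + (c : Fin (m+1))) ≤ 1 :=
    fun v c hc => circDistLe ha h3a v hc
  -- the charge sets
  set S : Fin (m+1) → Finset (Fin (m+1)) := fun v =>
    if f v = 2 then {v + ((m+1-a : ℕ) : Fin (m+1)), v + ((m:ℕ) : Fin (m+1)), v,
        v + ((1:ℕ) : Fin (m+1)), v + ((a:ℕ) : Fin (m+1))}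
    else {v, v + ((1:ℕ) : Fin (m+1))} with hS
  have hv0 : ∀ v : Fin (m+1), v + ((0:ℕ) : Fin (m+1)) = v := by intro v; simp
  have hmemS : ∀ v x, x ∈ S v → ∃ c : ℕ, P c ∧ x = v + (c : Fin (m+1)) := by
    intro v x hx
    simp only [hS] at hx
    split at hx <;> simp only [Finset.mem_insert, Finset.mem_singleton] at hx
    · rcases hx with rfl | rfl | rfl | rfl | rfl
      · exact ⟨m+1-a, by simp [hP], rfl⟩
      · exact ⟨m, by simp [hP], rfl⟩
      · exact ⟨0, by simp [hP], (hv0 _).symm⟩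
      · exact ⟨1, by simp [hP], rfl⟩
      · exact ⟨a, by simp [hP], rfl⟩
    · rcases hx with rfl | rfl
      · exact ⟨0, by simp [hP], (hv0 _).symm⟩
      · exact ⟨1, by simp [hP], rfl⟩
  have hdistS : ∀ v x, x ∈ S v → G.dist v x ≤ 1 := by
    intro v x hx
    obtain ⟨c, hc, rfl⟩ := hmemS v x hx
    exact hd1 v c hc
  -- injectivity of offsets
  have hne : ∀ (v : Fin (m+1)) (c c' : ℕ), c < m+1 → c' < m+1 → c ≠ c' →
      v + (c : Fin (m+1)) ≠ v + (c' : Fin (m+1)) := by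
    intro v c c' hc hc' hcc' h
    exact hcc' ((castFin_inj hc hc').mp (add_left_cancel h))
  -- cardinalities of the charge sets
  have hne0 : ∀ (v : Fin (m+1)) (c : ℕ), c < m+1 → c ≠ 0 → v + (c : Fin (m+1)) ≠ v := by
    intro v c h1 h2 h
    exact hne v c 0 h1 (by omega) h2 (by rw [hv0]; exact h)
  have hcard2 : ∀ v, f v = 2 → (S v).card = 5 := by
    intro v hfv
    have B1 : m + 1 - a < m + 1 := by omega
    have B2 : m < m + 1 := by omega
    have B4 : (1:ℕ) < m + 1 := by omega
    have B5 : a < m + 1 := by omega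
    have h12 := hne v _ _ B1 B2 (by omega)
    have h13 := hne0 v _ B1 (by omega)
    have h14 := hne v _ _ B1 B4 (by omega)
    have h15 := hne v _ _ B1 B5 (by omega)
    have h23 := hne0 v _ B2 (by omega)
    have h24 := hne v _ _ B2 B4 (by omega)
    have h25 := hne v _ _ B2 B5 (by omega)
    have h34 := (hne0 v 1 B4 (by omega)).symm
    have h35 := (hne0 v a B5 (by omega)).symm
    have h45 := hne v _ _ B4 B5 (by omega)
    simp only [hS, hfv, if_pos]
    rw [Finset.card_insert_of_notMem (by
        simp only [Finset.mem_insert, Finset.mem_singleton, not_or]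
        exact ⟨h12, h13, h14, h15⟩),
      Finset.card_insert_of_notMem (by
        simp only [Finset.mem_insert, Finset.mem_singleton, not_or]
        exact ⟨h23, h24, h25⟩),
      Finset.card_insert_of_notMem (by
        simp only [Finset.mem_insert, Finset.mem_singleton, not_or]
        exact ⟨h34, h35⟩),
      Finset.card_insert_of_notMem (by
        simp only [Finset.mem_singleton]
        exact h45), Finset.card_singleton]
  have hcard1 : ∀ v, f v = 1 → (S v).card = 2 := by
    intro v hfv
    have h34 := (hne0 v 1 (by omega) (by omega)).symm
    simp only [hS, hfv]
    rw [if_neg (by omega)]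
    rw [Finset.card_insert_of_notMem (by simp only [Finset.mem_singleton]; exact h34),
      Finset.card_singleton]
  -- disjointness of charge sets of supported vertices
  set T : Finset (Fin (m+1)) := Finset.univ.filter (fun v => 0 < f v) with hT
  have hdisj : ∀ u ∈ T, ∀ v ∈ T, u ≠ v → Disjoint (S u) (S v) := by
    intro u hu v hv huv
    have hfu : 0 < f u := (Finset.mem_filter.mp hu).2
    have hfv : 0 < f v := (Finset.mem_filter.mp hv).2
    have hlt := hf2 u v huv hfu hfv
    rw [Finset.disjoint_left]
    intro x hxu hxv
    by_cases hcase : f u = 1 ∧ f v = 1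
    · have hdist2 : 2 ≤ G.dist u v := by
        rw [hcase.1, hcase.2] at hlt; simp at hlt; omega
      have hnadj : ¬ G.Adj u v := by
        intro h
        rw [← SimpleGraph.dist_eq_one_iff_adj] at h
        omega
      have hnadj' : ¬ G.Adj v u := fun h => hnadj h.symm
      have hxu' : x = u ∨ x = u + ((1:ℕ) : Fin (m+1)) := by
        have := hxu; simp only [hS, if_neg (by omega : ¬ f u = 2),
          Finset.mem_insert, Finset.mem_singleton] at this
        exact this
      have hxv' : x = v ∨ x = v + ((1:ℕ) : Fin (m+1)) := by
        have := hxv; simp only [hS, if_neg (by omega : ¬ f v = 2),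
          Finset.mem_insert, Finset.mem_singleton] at this
        exact this
      rcases hxu' with rfl | h1 <;> rcases hxv' with h2 | h2
      · exact huv h2
      · exact hnadj' (h2 ▸ circAdj ha0 han (Or.inl rfl) v)
      · exact hnadj ((h2.symm.trans h1) ▸ circAdj ha0 han (Or.inl rfl) u)
      · exact huv (add_right_cancel (h1.symm.trans h2))
    · have hmax : 2 ≤ max (f u) (f v) := by
        have := hb u; have := hb v; omega
      have h3 : 3 ≤ G.dist u v := by omega
      have htri := hconn.dist_triangle (u := u) (v := x) (w := v)
      have d1 := hdistS u x hxu
      have d2 : G.dist x v ≤ 1 := by rw [SimpleGraph.dist_comm]; exact hdistS v x hxv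
      omega
  -- counting
  set T1 : Finset (Fin (m+1)) := Finset.univ.filter (fun v => f v = 1) with hT1
  set T2 : Finset (Fin (m+1)) := Finset.univ.filter (fun v => f v = 2) with hT2
  have hTsplit : T = T1 ∪ T2 := by
    ext x
    simp only [hT, hT1, hT2, Finset.mem_union, Finset.mem_filter, Finset.mem_univ, true_and]
    have := hb x; omega
  have hT12 : Disjoint T1 T2 := by
    rw [Finset.disjoint_left]
    intro x h1 h2
    simp only [hT1, hT2, Finset.mem_filter] at h1 h2
    omega
  have hbound : (T.biUnion S).card ≤ m + 1 := by
    have := Finset.card_le_univ (T.biUnion S)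
    simpa using this
  rw [Finset.card_biUnion hdisj] at hbound
  rw [hTsplit, Finset.sum_union hT12] at hbound
  have hs1 : ∑ v ∈ T1, (S v).card = 2 * T1.card := by
    rw [Finset.sum_congr rfl (fun v hv => hcard1 v (Finset.mem_filter.mp hv).2),
      Finset.sum_const, smul_eq_mul, mul_comm]
  have hs2 : ∑ v ∈ T2, (S v).card = 5 * T2.card := by
    rw [Finset.sum_congr rfl (fun v hv => hcard2 v (Finset.mem_filter.mp hv).2),
      Finset.sum_const, smul_eq_mul, mul_comm]
  rw [hs1, hs2] at hbound
  have hsum : ∑ v, f v = T1.card + 2 * T2.card := by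
    have h0 : ∑ v, f v = ∑ v ∈ T1 ∪ T2, f v := by
      refine (Finset.sum_subset (Finset.subset_univ _) ?_).symm
      intro x _ hx
      simp only [Finset.mem_union, hT1, hT2, Finset.mem_filter, Finset.mem_univ, true_and] at hx
      have := hb x; omega
    rw [h0, Finset.sum_union hT12,
      Finset.sum_congr rfl (fun v hv => (Finset.mem_filter.mp hv).2),
      Finset.sum_congr rfl (fun v hv => (Finset.mem_filter.mp hv).2),
      Finset.sum_const, Finset.sum_const, smul_eq_mul, smul_eq_mul, mul_one, mul_comm]
  rw [hsum]
  omega
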